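/- The bivariate polynomial f = Σ_{a=0}^d p_a · x₁^a x₂^{d−a}/(a!(d−a)!) with nonnegative coefficients p_a has the property that all sequences of directional second derivatives satisfy the Lorentzian condition (∂_u∂_u g)(∂_v∂_v g) ≤ (∂_u∂_v g)² for g any (d−2)-fold directional derivative of f and u, v in the nonnegative orthant, whenever p₀,…,p_d has no internal zeros and p_{a−1}p_{a+1} ≤ p_a² for all 0 < a < d. -/

import Mathlib

open MvPolynomial

/-- The directional derivative `∂_u = u₁∂₁ + u₂∂₂` acting on bivariate polynomials. -/
noncomputable def dirDeriv (u : Fin 2 → ℝ) (g : MvPolynomial (Fin 2) ℝ) :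
    MvPolynomial (Fin 2) ℝ :=
  C (u 0) * pderiv 0 g + C (u 1) * pderiv 1 g

noncomputable def FF (m : ℕ) (q : ℕ → ℝ) : MvPolynomial (Fin 2) ℝ :=
  ∑ a ∈ Finset.range (m + 1),
    C (q a / ((a.factorial : ℝ) * ((m - a).factorial : ℝ))) * X 0 ^ a * X 1 ^ (m - a)

def stepq (v : Fin 2 → ℝ) (q : ℕ → ℝ) : ℕ → ℝ := fun a => v 0 * q (a + 1) + v 1 * q a

theorem dstep (v : Fin 2 → ℝ) (m : ℕ) (q : ℕ → ℝ) :
    dirDeriv v (FF (m + 1) q) = FF m (stepq v q) := by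
  have key0 : ∀ (c : ℝ) (a b : ℕ), pderiv (R := ℝ) (0 : Fin 2) (C c * X 0 ^ a * X 1 ^ b)
      = C ((a:ℝ) * c) * X 0 ^ (a-1) * X 1 ^ b := by
    intro c a b
    rw [mul_assoc, pderiv_C_mul, pderiv_mul, pderiv_pow, pderiv_pow]
    simp
    ring
  have key1 : ∀ (c : ℝ) (a b : ℕ), pderiv (R := ℝ) (1 : Fin 2) (C c * X 0 ^ a * X 1 ^ b)
      = C ((b:ℝ) * c) * X 0 ^ a * X 1 ^ (b-1) := by
    intro c a b
    rw [mul_assoc, pderiv_C_mul, pderiv_mul, pderiv_pow, pderiv_pow]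
    simp
    ring
  have h0 : pderiv (R := ℝ) 0 (FF (m + 1) q) =
      ∑ a ∈ Finset.range (m + 1),
        C (q (a+1) / ((a.factorial : ℝ) * ((m - a).factorial : ℝ))) * X 0 ^ a * X 1 ^ (m - a) := by
    rw [FF, map_sum, Finset.sum_range_succ']
    simp only [key0]
    rw [Nat.cast_zero]
    rw [zero_mul, map_zero, zero_mul, zero_mul, add_zero]
    apply Finset.sum_congr rfl
    intro a _
    have e1 : (m + 1) - (a + 1) = m - a := by omega
    have e2 : (a + 1) - 1 = a := by omega
    rw [e1, e2]
    congr 1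
    congr 1
    rw [Nat.factorial_succ]
    have ha : (a.factorial : ℝ) ≠ 0 := Nat.cast_ne_zero.2 a.factorial_ne_zero
    have hb : ((m-a).factorial : ℝ) ≠ 0 := Nat.cast_ne_zero.2 (m-a).factorial_ne_zero
    push_cast
    field_simp
  have h1 : pderiv (R := ℝ) 1 (FF (m + 1) q) =
      ∑ a ∈ Finset.range (m + 1),
        C (q a / ((a.factorial : ℝ) * ((m - a).factorial : ℝ))) * X 0 ^ a * X 1 ^ (m - a) := by
    rw [FF, map_sum, Finset.sum_range_succ]
    simp only [key1]
    rw [Nat.sub_self, Nat.cast_zero]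
    rw [zero_mul, map_zero, zero_mul, zero_mul, add_zero]
    apply Finset.sum_congr rfl
    intro a ha'
    rw [Finset.mem_range] at ha'
    have e1 : (m + 1) - a = (m - a) + 1 := by omega
    have e2 : (m - a) + 1 - 1 = m - a := by omega
    rw [e1, e2]
    congr 1
    congr 1
    rw [Nat.factorial_succ]
    have ha : (a.factorial : ℝ) ≠ 0 := Nat.cast_ne_zero.2 a.factorial_ne_zero
    have hb : ((m-a).factorial : ℝ) ≠ 0 := Nat.cast_ne_zero.2 (m-a).factorial_ne_zero
    push_cast
    field_simp
  rw [dirDeriv, h0, h1, FF, Finset.mul_sum, Finset.mul_sum, ← Finset.sum_add_distrib]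
  apply Finset.sum_congr rfl
  intro a _
  rw [show stepq v q a = v 0 * q (a+1) + v 1 * q a from rfl]
  rw [show (v 0 * q (a+1) + v 1 * q a) / ((a.factorial : ℝ) * ((m - a).factorial : ℝ))
      = v 0 * (q (a+1) / ((a.factorial : ℝ) * ((m - a).factorial : ℝ)))
        + v 1 * (q a / ((a.factorial : ℝ) * ((m - a).factorial : ℝ))) by ring]
  rw [map_add, C_mul, C_mul]
  ring

def Props (m : ℕ) (q : ℕ → ℝ) : Prop :=
  (∀ a, a ≤ m → 0 ≤ q a) ∧
  (∀ i j k, i < j → j < k → k ≤ m → 0 < q i → 0 < q k → 0 < q j) ∧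
  (∀ a, 0 < a → a < m → q (a - 1) * q (a + 1) ≤ q a ^ 2)

theorem cross (m : ℕ) (q : ℕ → ℝ) (hP : Props (m + 1) q) (a : ℕ) (h1 : 1 ≤ a)
    (h2 : a + 2 ≤ m + 1) : q (a - 1) * q (a + 2) ≤ q a * q (a + 1) := by
  obtain ⟨hn, hz, hl⟩ := hP
  by_cases hpos : 0 < q (a - 1) ∧ 0 < q (a + 2)
  · obtain ⟨h3, h4⟩ := hpos
    have qa : 0 < q a := hz (a - 1) a (a + 2) (by omega) (by omega) h2 h3 h4
    have qa1 : 0 < q (a + 1) := hz (a - 1) (a + 1) (a + 2) (by omega) (by omega) h2 h3 h4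
    have la : q (a - 1) * q (a + 1) ≤ q a ^ 2 := hl a h1 (by omega)
    have la1 : q a * q (a + 2) ≤ q (a + 1) ^ 2 := by
      have := hl (a + 1) (by omega) (by omega)
      simpa using this
    nlinarith [mul_pos qa qa1, mul_le_mul la la1 (mul_nonneg qa.le h4.le) (sq_nonneg (q a))]
  · push_neg at hpos
    have hr : 0 ≤ q a * q (a + 1) :=
      mul_nonneg (hn a (by omega)) (hn (a + 1) (by omega))
    rcases le_or_gt (q (a - 1)) 0 with h | h
    · have : q (a - 1) = 0 := le_antisymm h (hn (a - 1) (by omega))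
      rw [this, zero_mul]; exact hr
    · have : q (a + 2) = 0 := le_antisymm (hpos h) (hn (a + 2) (by omega))
      rw [this, mul_zero]; exact hr

theorem stepProps (v : Fin 2 → ℝ) (hv : ∀ i, 0 ≤ v i) (m : ℕ) (q : ℕ → ℝ)
    (hP : Props (m + 1) q) : Props m (stepq v q) := by
  obtain ⟨hn, hz, hl⟩ := hP
  refine ⟨?_, ?_, ?_⟩
  · intro a ha
    exact add_nonneg (mul_nonneg (hv 0) (hn (a + 1) (by omega)))
      (mul_nonneg (hv 1) (hn a (by omega)))
  · intro i j k hij hjk hk hi hk'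
    have hsplit : ∀ l : ℕ, l + 1 ≤ m + 1 → 0 < stepq v q l →
        (0 < v 0 ∧ 0 < q (l + 1)) ∨ (0 < v 1 ∧ 0 < q l) := by
      intro l hl1 hpos
      rw [stepq] at hpos
      by_contra hcon
      push_neg at hcon
      have c1 : v 0 * q (l + 1) ≤ 0 := by
        rcases le_or_gt (v 0) 0 with h | h
        · exact mul_nonpos_of_nonpos_of_nonneg h (hn (l + 1) (by omega))
        · have := hcon.1 h
          exact mul_nonpos_of_nonneg_of_nonpos (hv 0) this
      have c2 : v 1 * q l ≤ 0 := by
        rcases le_or_gt (v 1) 0 with h | h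
        · exact mul_nonpos_of_nonpos_of_nonneg h (hn l (by omega))
        · have := hcon.2 h
          exact mul_nonpos_of_nonneg_of_nonpos (hv 1) this
      linarith
    have Hi := hsplit i (by omega) hi
    have Hk := hsplit k (by omega) hk'
    rw [stepq]
    rcases Hi with ⟨hv0, hqi⟩ | ⟨hv1, hqi⟩
    · -- v 0 > 0, q (i+1) > 0
      have hqj1 : 0 < q (j + 1) := by
        rcases Hk with ⟨_, hqk⟩ | ⟨_, hqk⟩
        · rcases Nat.eq_or_lt_of_le (show j + 1 ≤ k + 1 by omega) with h | h
          · rwa [h]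
          · exact hz (i + 1) (j + 1) (k + 1) (by omega) h (by omega) hqi hqk
        · rcases Nat.eq_or_lt_of_le (show j + 1 ≤ k by omega) with h | h
          · rwa [h]
          · exact hz (i + 1) (j + 1) k (by omega) h (by omega) hqi hqk
      have : 0 < v 0 * q (j + 1) := mul_pos hv0 hqj1
      have : 0 ≤ v 1 * q j := mul_nonneg (hv 1) (hn j (by omega))
      linarith
    · rcases Hk with ⟨hv0, hqk⟩ | ⟨_, hqk⟩
      · -- v 1 > 0 with q i > 0; v 0 > 0 with q (k+1) > 0
        have hqj1 : 0 < q (j + 1) :=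
          hz i (j + 1) (k + 1) (by omega) (by omega) (by omega) hqi hqk
        have : 0 < v 0 * q (j + 1) := mul_pos hv0 hqj1
        have : 0 ≤ v 1 * q j := mul_nonneg (hv 1) (hn j (by omega))
        linarith
      · have hqj : 0 < q j := hz i j k hij hjk (by omega) hqi hqk
        have : 0 < v 1 * q j := mul_pos hv1 hqj
        have : 0 ≤ v 0 * q (j + 1) := mul_nonneg (hv 0) (hn (j + 1) (by omega))
        linarith
  · intro a ha ham
    have la : q (a - 1) * q (a + 1) ≤ q a ^ 2 := hl a ha (by omega)
    have la1 : q a * q (a + 2) ≤ q (a + 1) ^ 2 := by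
      have := hl (a + 1) (by omega) (by omega)
      simpa using this
    have hc : q (a - 1) * q (a + 2) ≤ q a * q (a + 1) :=
      cross m q ⟨hn, hz, hl⟩ a ha (by omega)
    have e1 : a - 1 + 1 = a := by omega
    simp only [stepq, e1]
    nlinarith [mul_le_mul_of_nonneg_left la1 (sq_nonneg (v 0)),
      mul_le_mul_of_nonneg_left la (sq_nonneg (v 1)),
      mul_le_mul_of_nonneg_left hc (mul_nonneg (hv 0) (hv 1))]

theorem evalFF0 (r : ℕ → ℝ) : eval (fun _ => (0 : ℝ)) (FF 0 r) = r 0 := by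
  simp [FF]

theorem dFF0 (u : Fin 2 → ℝ) (r : ℕ → ℝ) : dirDeriv u (FF 0 r) = 0 := by
  simp [FF, dirDeriv]

theorem evalD2 (u w : Fin 2 → ℝ) (q : ℕ → ℝ) :
    eval (fun _ => (0 : ℝ)) (dirDeriv u (dirDeriv w (FF 2 q))) =
      u 0 * (w 0 * q 2 + w 1 * q 1) + u 1 * (w 0 * q 1 + w 1 * q 0) := by
  have h2 : dirDeriv w (FF 2 q) = FF 1 (stepq w q) := dstep w 1 q
  have h1 : dirDeriv u (FF 1 (stepq w q)) = FF 0 (stepq u (stepq w q)) := dstep u 0 (stepq w q)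
  rw [h2, h1, evalFF0]
  simp [stepq]

theorem foldFF (d : ℕ) (p : ℕ → ℝ) (v : ℕ → Fin 2 → ℝ) (hv : ∀ e i, 0 ≤ v e i)
    (hP : Props d p) : ∀ n, n ≤ d → ∃ q, Props (d - n) q ∧
      (List.range n).foldl (fun acc e => dirDeriv (v e) acc) (FF d p) = FF (d - n) q := by
  intro n
  induction n with
  | zero => intro _; exact ⟨p, by simpa using hP, by simp⟩
  | succ n ih =>
    intro hn
    obtain ⟨q, hq, hfold⟩ := ih (by omega)
    refine ⟨stepq (v n) q, ?_, ?_⟩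
    · have : d - n = (d - (n + 1)) + 1 := by omega
      rw [this] at hq
      exact stepProps (v n) (hv n) _ q hq
    · rw [List.range_succ, List.foldl_append, hfold, List.foldl_cons, List.foldl_nil]
      have : d - n = (d - (n + 1)) + 1 := by omega
      rw [this, dstep]

theorem stmt13 (d : ℕ) (p : ℕ → ℝ)
    (hp : ∀ a, a ≤ d → 0 ≤ p a)
    (hniz : ∀ i j k, i < j → j < k → k ≤ d → 0 < p i → 0 < p k → 0 < p j)
    (hlc : ∀ a, 0 < a → a < d → p (a - 1) * p (a + 1) ≤ p a ^ 2) :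
    ∀ u w : Fin 2 → ℝ, (∀ i, 0 ≤ u i) → (∀ i, 0 ≤ w i) →
    ∀ v : ℕ → Fin 2 → ℝ, (∀ e i, 0 ≤ v e i) →
    let f : MvPolynomial (Fin 2) ℝ := ∑ a ∈ Finset.range (d + 1),
      C (p a / ((a.factorial : ℝ) * ((d - a).factorial : ℝ))) * X 0 ^ a * X 1 ^ (d - a)
    let g : MvPolynomial (Fin 2) ℝ :=
      (List.range (d - 2)).foldl (fun acc e => dirDeriv (v e) acc) f
    eval (fun _ => (0 : ℝ)) (dirDeriv u (dirDeriv u g)) *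
        eval (fun _ => (0 : ℝ)) (dirDeriv w (dirDeriv w g)) ≤
      (eval (fun _ => (0 : ℝ)) (dirDeriv u (dirDeriv w g))) ^ 2 := by
  intro u w hu hw v hv f g
  obtain ⟨q, hq, hfold⟩ := foldFF d p v hv ⟨hp, hniz, hlc⟩ (d - 2) (by omega)
  have hg : g = FF (d - (d - 2)) q := hfold
  rcases lt_or_ge d 2 with hd | hd
  · -- degree < 2: all second derivatives vanish
    have hd2 : d - (d - 2) = d := by omega
    rw [hd2] at hg
    interval_cases d
    · rw [hg, dFF0]
      simp [dirDeriv]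
      positivity
    · have h1 : ∀ z : Fin 2 → ℝ, dirDeriv z (FF 1 q) = FF 0 (stepq z q) := fun z => dstep z 0 q
      simp only [hg, h1, dFF0]
      simp
  · have hd2 : d - (d - 2) = 2 := by omega
    rw [hd2] at hg hq
    rw [hg, evalD2, evalD2, evalD2]
    have hlc1 : q 0 * q 2 ≤ q 1 ^ 2 := by
      have := hq.2.2 1 one_pos one_lt_two
      simpa using this
    nlinarith [mul_le_mul_of_nonneg_right hlc1 (sq_nonneg (u 0 * w 1 - u 1 * w 0)),
      sq_nonneg (u 0 * w 1 - u 1 * w 0)]
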